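/- Let T ⊂ ℝ^p and X ⊂ ℝ^n be compact, and let a : T × X → ℝ and b : T × X → ℝ^{1×m} be Lipschitz with constants L_a and L_b respectively (with respect to τ, uniformly in x). Let ε > 0, M > 0, and set Δ* = ε/(L_a + L_b·M). Suppose {τ_1,…,τ_N} ⊆ T and Δ ≤ Δ* are such that the balls B_Δ(τ_i) cover T. If ν ∈ ℝ^m satisfies ‖ν‖ ≤ M and a(τ_i,x) + b(τ_i,x)·ν ≤ −ε for all i ∈ {1,…,N}, then a(τ,x) + b(τ,x)·ν ≤ 0 for all τ ∈ T. -/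

import Mathlib

/-- quantitative core of Proposition 5: a bounded input satisfying
the finitely many sampled constraints with margin `ε` satisfies all constraints. -/
theorem stmt14 {p n m : ℕ} (T : Set (EuclideanSpace ℝ (Fin p))) (hT : IsCompact T)
    (X : Set (EuclideanSpace ℝ (Fin n))) (hX : IsCompact X)
    (a : EuclideanSpace ℝ (Fin p) → EuclideanSpace ℝ (Fin n) → ℝ)
    (b : EuclideanSpace ℝ (Fin p) → EuclideanSpace ℝ (Fin n) → EuclideanSpace ℝ (Fin m))
    (La Lb : ℝ)
    (haLip : ∀ x ∈ X, ∀ τ ∈ T, ∀ τ' ∈ T, |a τ x - a τ' x| ≤ La * ‖τ - τ'‖)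
    (hbLip : ∀ x ∈ X, ∀ τ ∈ T, ∀ τ' ∈ T, ‖b τ x - b τ' x‖ ≤ Lb * ‖τ - τ'‖)
    (ε M : ℝ) (hε : 0 < ε) (hM : 0 < M)
    (hLaLbM : 0 < La + Lb * M)
    (N : ℕ) (τs : Fin N → EuclideanSpace ℝ (Fin p)) (hτs : ∀ i, τs i ∈ T)
    (Δ : ℝ) (hΔ : Δ ≤ ε / (La + Lb * M))
    (hcover : T ⊆ ⋃ i : Fin N, Metric.closedBall (τs i) Δ)
    (x : EuclideanSpace ℝ (Fin n)) (hx : x ∈ X)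
    (ν : EuclideanSpace ℝ (Fin m)) (hν : ‖ν‖ ≤ M)
    (hsample : ∀ i : Fin N, a (τs i) x + (inner ℝ (b (τs i) x) ν : ℝ) ≤ -ε) :
    ∀ τ ∈ T, a τ x + (inner ℝ (b τ x) ν : ℝ) ≤ 0 := by
  intro τ hτ
  obtain ⟨s, ⟨i, rfl⟩, hmem⟩ := hcover hτ
  have hd : ‖τ - τs i‖ ≤ Δ := by
    simpa [dist_eq_norm] using hmem
  have hd0 : (0:ℝ) ≤ ‖τ - τs i‖ := norm_nonneg _
  have hΔ0 : 0 ≤ Δ := le_trans hd0 hd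
  have ha : a τ x - a (τs i) x ≤ La * ‖τ - τs i‖ :=
    le_trans (le_abs_self _) (haLip x hx τ hτ (τs i) (hτs i))
  have hb : (inner ℝ (b τ x) ν : ℝ) - inner ℝ (b (τs i) x) ν ≤ Lb * ‖τ - τs i‖ * M := by
    have : (inner ℝ (b τ x) ν : ℝ) - inner ℝ (b (τs i) x) ν = inner ℝ (b τ x - b (τs i) x) ν := by
      rw [inner_sub_left]
    rw [this]
    calc (inner ℝ (b τ x - b (τs i) x) ν : ℝ) ≤ ‖b τ x - b (τs i) x‖ * ‖ν‖ :=
          real_inner_le_norm _ _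
      _ ≤ (Lb * ‖τ - τs i‖) * M := by
          exact mul_le_mul (hbLip x hx τ hτ (τs i) (hτs i)) hν (norm_nonneg _)
            (le_trans (norm_nonneg _) (hbLip x hx τ hτ (τs i) (hτs i)))
  have hslack : La * ‖τ - τs i‖ + Lb * ‖τ - τs i‖ * M ≤ ε := by
    have : (La + Lb * M) * ‖τ - τs i‖ ≤ (La + Lb * M) * Δ :=
      mul_le_mul_of_nonneg_left hd hLaLbM.le
    have h2 : (La + Lb * M) * Δ ≤ ε := by
      rw [le_div_iff₀ hLaLbM] at hΔ
      linarith [hΔ]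
    nlinarith
  have := hsample i
  nlinarith
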